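/- Let H be a Hilbert space, (X,B,μ) a measure space, and |·| : H → L²₊(X,μ) an absolute pairing. Let a be a lower bounded closed quadratic form on H and b a lower bounded closed quadratic form on L²(X,μ) satisfying the first Beurling–Deny criterion. Let D_a ⊆ D(a) be a subspace that is an ideal of D(a) (with respect to |·|) and D_b ⊆ D(b) a subspace that is an ideal of D(b) (with respect to the pointwise modulus). Assume (i) a is dominated by b, and (ii) every nonnegative element of D_b that lies in |D(a)| lies in |D_a| (i.e. D_b⁺ ∩ |D(a)| ⊆ |D_a|). Then: if D_b is dense in D(b) with respect to the form norm of b, then D_a is dense in D(a) with respect to the form norm of a. -/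

import Mathlib

open MeasureTheory
open scoped ComplexInnerProductSpace

noncomputable section

/-- A (densely defined) quadratic form on a complex Hilbert space `H`: a dense domain
`dom` and a map `Q` which, on the domain, is absolutely homogeneous of degree two and
satisfies the parallelogram identity. (The values of `Q` outside of `dom` are irrelevant.) -/
structure QForm (H : Type*) [NormedAddCommGroup H] [InnerProductSpace ℂ H] where
  dom : Submodule ℂ H
  dense_dom : Dense (dom : Set H)
  Q : H → ℝ
  smul_eq : ∀ (a : ℂ), ∀ f ∈ dom, Q (a • f) = ‖a‖ ^ 2 * Q f
  parallelogram : ∀ f ∈ dom, ∀ g ∈ dom, Q (f + g) + Q (f - g) = 2 * Q f + 2 * Q g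

/-- The squared form norm `‖f‖_q² = q(f) + μ'·‖f‖²` of a quadratic form, for a shift `μ'`. -/
def QForm.normSq {H : Type*} [NormedAddCommGroup H] [InnerProductSpace ℂ H]
    (q : QForm H) (μ' : ℝ) (f : H) : ℝ :=
  q.Q f + μ' * ‖f‖ ^ 2

/-- A quadratic form on `L²(X,μ)` is real if the domain is conjugation invariant and
`q(conj f) = q(f)`. -/
def QForm.IsReal {X : Type*} [MeasurableSpace X] {μ : Measure X}
    (q : QForm (Lp ℂ 2 μ)) : Prop :=
  ∀ f ∈ q.dom, ∃ g ∈ q.dom,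
    (∀ᵐ x ∂μ, g x = (starRingEnd ℂ) (f x)) ∧ q.Q g = q.Q f

/-- The first Beurling–Deny criterion for a quadratic form on `L²(X,μ)`: the form is real,
and `f ∈ D(q)` implies `|f| ∈ D(q)` with `q(|f|) ≤ q(f)`. -/
def QForm.BeurlingDeny {X : Type*} [MeasurableSpace X] {μ : Measure X}
    (q : QForm (Lp ℂ 2 μ)) : Prop :=
  q.IsReal ∧ ∀ f ∈ q.dom, ∃ g ∈ q.dom,
    (∀ᵐ x ∂μ, g x = ((‖f x‖ : ℝ) : ℂ)) ∧ q.Q g ≤ q.Q f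

end


noncomputable section

/-- The sesquilinear form induced by a quadratic form via polarization:
`q(f,g) = ¼ ∑_{k=1}^{4} i^k q(f + i^k g)`. -/
def QForm.sesq {H : Type*} [NormedAddCommGroup H] [InnerProductSpace ℂ H]
    (q : QForm H) (f g : H) : ℂ :=
  (1 / 4 : ℂ) * ∑ k ∈ Finset.range 4,
    Complex.I ^ (k + 1) * (q.Q (f + Complex.I ^ (k + 1) • g) : ℂ)

/-- Closedness of a quadratic form with respect to the form norm given by the shift `μ'`. -/
def QForm.ClosedWith {H : Type*} [NormedAddCommGroup H] [InnerProductSpace ℂ H]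
    (q : QForm H) (μ' : ℝ) : Prop :=
  ∀ u : ℕ → H, (∀ n, u n ∈ q.dom) →
    (∀ ε > (0 : ℝ), ∃ N : ℕ, ∀ i ≥ N, ∀ j ≥ N, q.normSq μ' (u i - u j) < ε) →
    ∃ v ∈ q.dom, Filter.Tendsto (fun n => q.normSq μ' (u n - v)) Filter.atTop (nhds 0)

variable {X : Type*} [MeasurableSpace X] {μ : MeasureTheory.Measure X}
variable {H : Type*} [NormedAddCommGroup H] [InnerProductSpace ℂ H]

/-- An element of `L²(X,μ)` is (a.e.) a nonnegative real function,
i.e. belongs to `L²₊(X,μ)`. -/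
def AeNonneg (μ : MeasureTheory.Measure X) (f : Lp ℂ 2 μ) : Prop :=
  ∀ᵐ x ∂μ, (f x).im = 0 ∧ 0 ≤ (f x).re

/-- `ξ` and `η` are paired with respect to the absolute map `A`: `⟨ξ,η⟩ = ⟨|ξ|,|η|⟩`. -/
def Paired (μ : MeasureTheory.Measure X) (A : H → Lp ℂ 2 μ) (ξ η : H) : Prop :=
  ⟪ξ, η⟫ = ⟪A ξ, A η⟫

/-- `A : H → L²₊(X,μ)` is an absolute pairing: it is an absolute map
(`|⟨ξ,η⟩| ≤ ⟨|ξ|,|η|⟩` with equality for `ξ = η`), and for every `ξ ∈ H` and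
`f ∈ L²₊(X,μ)` there is `η ∈ H` with `|η| = f` paired with `ξ`. -/
def IsAbsolutePairing (μ : MeasureTheory.Measure X) (A : H → Lp ℂ 2 μ) : Prop :=
  (∀ ξ, AeNonneg μ (A ξ)) ∧
  (∀ ξ η : H, ‖⟪ξ, η⟫‖ ≤ (⟪A ξ, A η⟫ : ℂ).re) ∧
  (∀ ξ : H, ‖⟪ξ, ξ⟫‖ = (⟪A ξ, A ξ⟫ : ℂ).re) ∧
  (∀ ξ : H, ∀ f : Lp ℂ 2 μ, AeNonneg μ f → ∃ η : H, A η = f ∧ Paired μ A ξ η)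

/-- `a` is dominated by `b` (with respect to the absolute map `A`): `D(a)` is a
generalized ideal of `D(b)` and `Re a(ξ,η) ≥ b(|ξ|,|η|)` for paired `ξ, η ∈ D(a)`. -/
def DominatedBy (μ : MeasureTheory.Measure X) (A : H → Lp ℂ 2 μ)
    (a : QForm H) (b : QForm (Lp ℂ 2 μ)) : Prop :=
  (∀ ξ ∈ a.dom, A ξ ∈ b.dom ∧
    ∀ f ∈ b.dom, (∀ᵐ x ∂μ, (f x).im = 0 ∧ 0 ≤ (f x).re ∧ (f x).re ≤ (A ξ x).re) →
      ∃ η ∈ a.dom, A η = f ∧ Paired μ A ξ η) ∧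
  (∀ ξ ∈ a.dom, ∀ η ∈ a.dom, Paired μ A ξ η →
    (b.sesq (A ξ) (A η)).re ≤ (a.sesq ξ η).re)

end

noncomputable section
namespace QFormAux

variable {F : Type*} [NormedAddCommGroup F] [InnerProductSpace ℂ F]
variable (q : QForm F) (s : ℝ)

/-- The real bilinear form associated to a shifted quadratic form. -/
def Bl (x y : F) : ℝ := (q.normSq s (x + y) - q.normSq s (x - y)) / 4

variable {q s}

lemma Q_zero : q.Q 0 = 0 := by
  have := q.smul_eq 0 0 (Submodule.zero_mem _)
  simpa using this

lemma N_zero : q.normSq s 0 = 0 := by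
  simp [QForm.normSq, Q_zero]

lemma N_smul (c : ℂ) {f : F} (hf : f ∈ q.dom) :
    q.normSq s (c • f) = ‖c‖ ^ 2 * q.normSq s f := by
  rw [QForm.normSq, QForm.normSq, q.smul_eq c f hf, norm_smul]
  ring

lemma N_neg {f : F} (hf : f ∈ q.dom) : q.normSq s (-f) = q.normSq s f := by
  have := N_smul (q := q) (s := s) (-1) hf
  simpa using this

lemma N_par {f g : F} (hf : f ∈ q.dom) (hg : g ∈ q.dom) :
    q.normSq s (f + g) + q.normSq s (f - g) = 2 * q.normSq s f + 2 * q.normSq s g := by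
  have h1 := q.parallelogram f hf g hg
  have h2 := parallelogram_law_with_norm ℂ f g
  simp only [QForm.normSq]
  linear_combination h1 + s * h2

lemma Bl_symm {x y : F} (hx : x ∈ q.dom) (hy : y ∈ q.dom) :
    Bl q s x y = Bl q s y x := by
  have : y - x = -(x - y) := by abel
  rw [Bl, Bl, add_comm, this, N_neg (Submodule.sub_mem _ hx hy)]

lemma Bl_self {x : F} (hx : x ∈ q.dom) : Bl q s x x = q.normSq s x := by
  have h2 : x + x = (2 : ℂ) • x := by
    rw [two_smul]
  rw [Bl, sub_self, N_zero, h2, N_smul 2 hx]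
  norm_num

lemma Bl_zero_right (x : F) : Bl q s x 0 = 0 := by
  simp [Bl]

lemma Bl_neg_right {x y : F} : Bl q s x (-y) = - Bl q s x y := by
  have h1 : x + -y = x - y := by abel
  have h2 : x - -y = x + y := by abel
  rw [Bl, Bl, h1, h2]
  ring

lemma Bl_add_right {x y z : F} (hx : x ∈ q.dom) (hy : y ∈ q.dom) (hz : z ∈ q.dom) :
    Bl q s x (y + z) = Bl q s x y + Bl q s x z := by
  -- key identity: Bl x y + Bl x z = 2 * Bl x ((1/2)(y+z))
  have key : ∀ y z : F, y ∈ q.dom → z ∈ q.dom →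
      Bl q s x y + Bl q s x z = 2 * Bl q s x ((2⁻¹ : ℂ) • (y + z)) := by
    intro y z hy hz
    set m := (2⁻¹ : ℂ) • (y + z) with hm
    set d := (2⁻¹ : ℂ) • (y - z) with hd
    have hmd : m ∈ q.dom := Submodule.smul_mem _ _ (Submodule.add_mem _ hy hz)
    have e1 : x + y = (x + m) + d := by rw [hm, hd]; module
    have e2 : x + z = (x + m) - d := by rw [hm, hd]; module
    have e3 : x - y = (x - m) - d := by rw [hm, hd]; module
    have e4 : x - z = (x - m) + d := by rw [hm, hd]; module
    have p1 := N_par (q := q) (s := s) (Submodule.add_mem _ hx hmd)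
      (Submodule.smul_mem _ (2⁻¹ : ℂ) (Submodule.sub_mem _ hy hz))
    have p2 := N_par (q := q) (s := s) (Submodule.sub_mem _ hx hmd)
      (Submodule.smul_mem _ (2⁻¹ : ℂ) (Submodule.sub_mem _ hy hz))
    rw [← hd] at p1 p2
    rw [Bl, Bl, Bl, e1, e2, e3, e4]
    linarith
  have k1 := key y z hy hz
  have k2 := key (y + z) 0 (Submodule.add_mem _ hy hz) (Submodule.zero_mem _)
  rw [Bl_zero_right, add_zero] at k2
  rw [add_zero] at k2
  rw [k2, k1]

end QFormAux
end

noncomputable section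
namespace QFormAux
variable {F : Type*} [NormedAddCommGroup F] [InnerProductSpace ℂ F]
variable {q : QForm F} {s : ℝ}

lemma N_sub_expand {x w : F} (hx : x ∈ q.dom) (hw : w ∈ q.dom) :
    q.normSq s (x - w) = q.normSq s x + q.normSq s w - 2 * Bl q s x w := by
  have hp := N_par (q := q) (s := s) hx hw
  rw [Bl]; linarith

lemma N_add_expand {x w : F} (hx : x ∈ q.dom) (hw : w ∈ q.dom) :
    q.normSq s (x + w) = q.normSq s x + q.normSq s w + 2 * Bl q s x w := by
  have hp := N_par (q := q) (s := s) hx hw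
  rw [Bl]; linarith

lemma Bl_abs_le (hN : ∀ f ∈ q.dom, 0 ≤ q.normSq s f) {x z : F}
    (hx : x ∈ q.dom) (hz : z ∈ q.dom) :
    |Bl q s x z| ≤ (q.normSq s x + q.normSq s z) / 2 := by
  have hp := N_par (q := q) (s := s) hx hz
  have h1 := hN _ (Submodule.add_mem _ hx hz)
  have h2 := hN _ (Submodule.sub_mem _ hx hz)
  rw [Bl, abs_le]
  constructor <;> linarith

lemma Bl_nsmul (n : ℕ) {x y : F} (hx : x ∈ q.dom) (hy : y ∈ q.dom) :
    Bl q s x ((n : ℂ) • y) = n * Bl q s x y := by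
  induction n with
  | zero => simpa using Bl_zero_right (q := q) (s := s) x
  | succ n ih =>
      have : ((n + 1 : ℕ) : ℂ) • y = (n : ℂ) • y + y := by
        push_cast; rw [add_smul, one_smul]
      rw [this, Bl_add_right hx (Submodule.smul_mem _ _ hy) hy, ih]
      push_cast; ring

/-- The additive map `t ↦ Bl x (t • y)`. -/
def blHom (q : QForm F) (s : ℝ) (x y : F) (hx : x ∈ q.dom) (hy : y ∈ q.dom) : ℝ →+ ℝ :=
  AddMonoidHom.mk' (fun t => Bl q s x ((t : ℂ) • y)) (by
    intro a b
    show Bl q s x (((a + b : ℝ) : ℂ) • y) = Bl q s x ((a : ℂ) • y) + Bl q s x ((b : ℂ) • y)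
    have : ((a + b : ℝ) : ℂ) • y = (a : ℂ) • y + (b : ℂ) • y := by
      push_cast; rw [add_smul]
    rw [this]
    exact Bl_add_right hx (Submodule.smul_mem _ _ hy) (Submodule.smul_mem _ _ hy))

set_option maxHeartbeats 1000000 in
lemma Bl_real_smul (hN : ∀ f ∈ q.dom, 0 ≤ q.normSq s f) {x y : F}
    (hx : x ∈ q.dom) (hy : y ∈ q.dom) (t : ℝ) :
    Bl q s x ((t : ℂ) • y) = t * Bl q s x y := by
  set φ := blHom q s x y hx hy with hφ
  have hφdef : ∀ u : ℝ, φ u = Bl q s x ((u : ℂ) • y) := fun u => rfl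
  have hrat : ∀ (c : ℚ) (u : ℝ), φ ((c : ℝ) * u) = (c : ℝ) * φ u := by
    intro c u
    have := map_ratCast_smul φ ℝ ℝ c u
    simpa [smul_eq_mul] using this
  have hNx := hN x hx
  have hNy := hN y hy
  -- the basic bound
  have hbound : ∀ u : ℝ, |φ u| ≤ (q.normSq s x + u ^ 2 * q.normSq s y) / 2 := by
    intro u
    have h1 : q.normSq s ((u : ℂ) • y) = u ^ 2 * q.normSq s y := by
      rw [N_smul _ hy, Complex.norm_real, Real.norm_eq_abs, sq_abs]
    have := Bl_abs_le hN hx (Submodule.smul_mem q.dom ((u : ℂ)) hy)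
    rw [hφdef, h1] at *
    linarith [this]
  -- refined bound via scaling
  have hbound2 : ∀ (n : ℕ), 0 < n → ∀ u : ℝ,
      |φ u| ≤ q.normSq s x / (2 * n) + n * u ^ 2 * q.normSq s y / 2 := by
    intro n hn u
    have hmap : φ ((n : ℝ) * u) = n * φ u := by
      have := map_nsmul φ n u
      simpa [nsmul_eq_mul] using this
    have hb := hbound ((n : ℝ) * u)
    rw [hmap, abs_mul, Nat.abs_cast, mul_pow] at hb
    have hn' : (0 : ℝ) < n := by exact_mod_cast hn
    rw [show q.normSq s x / (2 * n) + n * u ^ 2 * q.normSq s y / 2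
        = (q.normSq s x + (n:ℝ)^2 * u^2 * q.normSq s y) / (2 * n) by field_simp,
      le_div_iff₀ (by positivity)]
    nlinarith [hb]
  -- conclude
  have hkey : ∀ (n : ℕ), 0 < n → |φ t - t * φ 1| ≤ q.normSq s x / (2 * n) := by
    intro n hn
    have hn' : (0 : ℝ) < n := by exact_mod_cast hn
    apply le_of_forall_pos_le_add
    intro ε hε
    set Cden : ℝ := n * q.normSq s y / 2 + |φ 1| + 1 with hC
    have hCpos : 0 < Cden := by positivity
    set δ : ℝ := min 1 (ε / Cden) with hδ
    have hδpos : 0 < δ := lt_min one_pos (by positivity)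
    obtain ⟨r, hr⟩ := exists_rat_near t hδpos
    have hsplit : φ t - t * φ 1 = φ (t - r) + ((r : ℝ) - t) * φ 1 := by
      have h1 : φ t = φ (t - r) + φ (r : ℝ) := by
        rw [← map_add]; ring_nf
      have h2 : φ (r : ℝ) = (r : ℝ) * φ 1 := by
        have := hrat r 1
        simpa using this
      rw [h1, h2]; ring
    have hsmall : |φ (t - r)| ≤ q.normSq s x / (2 * n) + n * δ ^ 2 * q.normSq s y / 2 := by
      have := hbound2 n hn (t - r)
      have hsq : (t - r) ^ 2 ≤ δ ^ 2 := by
        calc (t-r)^2 = |t - r|^2 := (sq_abs _).symm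
        _ ≤ δ ^ 2 := by
            apply pow_le_pow_left₀ (abs_nonneg _) (le_of_lt hr)
      have h4 : (n:ℝ) * (t - r) ^ 2 * q.normSq s y / 2 ≤ (n:ℝ) * δ ^ 2 * q.normSq s y / 2 := by
        nlinarith [mul_le_mul_of_nonneg_left hsq (mul_nonneg hn'.le hNy)]
      linarith [this, h4]
    have hδ1 : δ ≤ 1 := min_le_left _ _
    have hδ2 : δ ≤ ε / Cden := min_le_right _ _
    calc |φ t - t * φ 1| ≤ |φ (t - r)| + |(r : ℝ) - t| * |φ 1| := by
          rw [hsplit]; exact (abs_add_le _ _).trans (by rw [abs_mul])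
    _ ≤ (q.normSq s x / (2 * n) + n * δ ^ 2 * q.normSq s y / 2) + δ * |φ 1| := by
        have : |(r : ℝ) - t| ≤ δ := by rw [abs_sub_comm]; exact le_of_lt hr
        have h3 : |(r:ℝ) - t| * |φ 1| ≤ δ * |φ 1| :=
          mul_le_mul_of_nonneg_right this (abs_nonneg _)
        linarith [hsmall, h3]
    _ ≤ q.normSq s x / (2 * n) + δ * Cden := by
        have hδsq : δ ^ 2 ≤ δ := by nlinarith [hδpos.le, hδ1]
        have h5 : (n:ℝ) * δ ^ 2 * q.normSq s y / 2 ≤ δ * ((n:ℝ) * q.normSq s y / 2) := by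
          nlinarith [mul_le_mul_of_nonneg_left hδsq
            (by positivity : (0:ℝ) ≤ (n:ℝ) * q.normSq s y / 2)]
        rw [hC]
        nlinarith [h5, hδpos.le, abs_nonneg (φ 1)]
    _ ≤ q.normSq s x / (2 * n) + ε := by
        have := mul_le_mul_of_nonneg_right hδ2 hCpos.le
        rw [div_mul_cancel₀ _ (ne_of_gt hCpos)] at this
        linarith
  have hzero : |φ t - t * φ 1| = 0 := by
    have hle : ∀ ε > (0:ℝ), |φ t - t * φ 1| ≤ ε := by
      intro ε hε
      obtain ⟨n, hnn⟩ := exists_nat_gt (q.normSq s x / (2 * ε))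
      have hkey' := hkey (n + 1) (Nat.succ_pos n)
      have hmono : q.normSq s x / (2 * ((n:ℝ) + 1)) ≤ ε := by
        rw [div_le_iff₀ (by positivity)]
        have h2 : q.normSq s x / (2 * ε) < (n:ℝ) + 1 := by
          have : (n:ℝ) < (n:ℝ) + 1 := by linarith
          linarith [hnn]
        rw [div_lt_iff₀ (by positivity : (0:ℝ) < 2 * ε)] at h2
        nlinarith [h2]
      push_cast at hkey'
      linarith
    have h0 : |φ t - t * φ 1| ≤ 0 := by
      apply le_of_forall_pos_le_add
      intro ε hε
      simpa using hle ε hε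
    exact le_antisymm h0 (abs_nonneg _)
  have : φ t - t * φ 1 = 0 := abs_eq_zero.mp hzero
  have h1 : φ 1 = Bl q s x y := by
    rw [hφdef]; norm_num
  have h2 : φ t = Bl q s x ((t : ℂ) • y) := hφdef t
  rw [← h2, ← h1]
  linarith [this]

end QFormAux
end

noncomputable section
namespace QFormAux
variable {F : Type*} [NormedAddCommGroup F] [InnerProductSpace ℂ F]
variable {q : QForm F} {s : ℝ}

lemma Bl_sq_le (hN : ∀ f ∈ q.dom, 0 ≤ q.normSq s f) {x y : F}
    (hx : x ∈ q.dom) (hy : y ∈ q.dom) :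
    (Bl q s x y) ^ 2 ≤ q.normSq s x * q.normSq s y := by
  have hquad : ∀ t : ℝ, 0 ≤ q.normSq s y * (t * t) + (-2 * Bl q s x y) * t + q.normSq s x := by
    intro t
    have hw : (t : ℂ) • y ∈ q.dom := Submodule.smul_mem _ _ hy
    have hexp := N_sub_expand (s := s) hx hw
    have hsm : q.normSq s ((t : ℂ) • y) = t ^ 2 * q.normSq s y := by
      rw [N_smul _ hy, Complex.norm_real, Real.norm_eq_abs, sq_abs]
    have hbl : Bl q s x ((t : ℂ) • y) = t * Bl q s x y := Bl_real_smul hN hx hy t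
    have h0 := hN _ (Submodule.sub_mem _ hx hw)
    rw [hexp, hsm, hbl] at h0
    nlinarith [h0]
  have := discrim_le_zero hquad
  rw [discrim] at this
  nlinarith [this]

lemma Bl_abs_le_sqrt (hN : ∀ f ∈ q.dom, 0 ≤ q.normSq s f) {x y : F}
    (hx : x ∈ q.dom) (hy : y ∈ q.dom) :
    |Bl q s x y| ≤ Real.sqrt (q.normSq s x) * Real.sqrt (q.normSq s y) := by
  have h := Bl_sq_le hN hx hy
  have h2 : |Bl q s x y| = Real.sqrt ((Bl q s x y) ^ 2) := (Real.sqrt_sq_eq_abs _).symm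
  rw [h2, ← Real.sqrt_mul (hN x hx)]
  exact Real.sqrt_le_sqrt h

lemma sqrtN_add_le (hN : ∀ f ∈ q.dom, 0 ≤ q.normSq s f) {x y : F}
    (hx : x ∈ q.dom) (hy : y ∈ q.dom) :
    Real.sqrt (q.normSq s (x + y)) ≤ Real.sqrt (q.normSq s x) + Real.sqrt (q.normSq s y) := by
  have hexp := N_add_expand (s := s) hx hy
  have hcs := Bl_abs_le_sqrt hN hx hy
  have h1 : q.normSq s (x + y) ≤ (Real.sqrt (q.normSq s x) + Real.sqrt (q.normSq s y)) ^ 2 := by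
    have e1 : Real.sqrt (q.normSq s x) ^ 2 = q.normSq s x := Real.sq_sqrt (hN x hx)
    have e2 : Real.sqrt (q.normSq s y) ^ 2 = q.normSq s y := Real.sq_sqrt (hN y hy)
    have := abs_le.mp hcs
    nlinarith [this.2]
  calc Real.sqrt (q.normSq s (x + y)) ≤ Real.sqrt ((Real.sqrt (q.normSq s x) + Real.sqrt (q.normSq s y)) ^ 2) :=
        Real.sqrt_le_sqrt h1
  _ = Real.sqrt (q.normSq s x) + Real.sqrt (q.normSq s y) := by
        rw [Real.sqrt_sq (by positivity)]

lemma sqrtN_sub_le (hN : ∀ f ∈ q.dom, 0 ≤ q.normSq s f) {x y : F}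
    (hx : x ∈ q.dom) (hy : y ∈ q.dom) :
    Real.sqrt (q.normSq s (x - y)) ≤ Real.sqrt (q.normSq s x) + Real.sqrt (q.normSq s y) := by
  have := sqrtN_add_le hN hx (Submodule.neg_mem _ hy)
  rw [N_neg hy] at this
  simpa [sub_eq_add_neg] using this

end QFormAux
end

noncomputable section
namespace QFormAux
variable {F : Type*} [NormedAddCommGroup F] [InnerProductSpace ℂ F]
variable {q : QForm F} {s : ℝ}

lemma re_sesq (x y : F) :
    (q.sesq x y).re = (q.Q (x + y) - q.Q (x - y)) / 4 := by
  rw [QForm.sesq]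
  have h2 : (Complex.I) ^ 2 = -1 := Complex.I_sq
  have h3 : (Complex.I) ^ 3 = -Complex.I := by
    rw [pow_succ, h2]; ring
  have h4 : (Complex.I) ^ 4 = 1 := by
    rw [pow_succ, h3]; simp [Complex.I_mul_I]
  rw [Finset.sum_range_succ, Finset.sum_range_succ, Finset.sum_range_succ,
    Finset.sum_range_succ, Finset.sum_range_zero]
  norm_num [h2, h3, h4]
  rw [← sub_eq_add_neg]
  ring

lemma Bl_eq_sesq (x y : F) :
    Bl q s x y = (q.sesq x y).re + s * (⟪x, y⟫ : ℂ).re := by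
  have hre : (⟪x, y⟫ : ℂ).re = (‖x + y‖ * ‖x + y‖ - ‖x - y‖ * ‖x - y‖) / 4 := by
    have := re_inner_eq_norm_add_mul_self_sub_norm_sub_mul_self_div_four (𝕜 := ℂ) x y
    simpa using this
  rw [Bl, re_sesq, hre, QForm.normSq, QForm.normSq]
  rw [pow_two, pow_two]
  ring

end QFormAux
end

noncomputable section
namespace QFormAux
open Filter
variable {F : Type*} [NormedAddCommGroup F] [InnerProductSpace ℂ F]
variable {q : QForm F} {lam S : ℝ}

section shifts
variable (hlb : ∀ f ∈ q.dom, -lam * ‖f‖ ^ 2 ≤ q.Q f) (hS : lam + 1 ≤ S)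

lemma normSq_le_shift {f : F} {s s' : ℝ} (h : s ≤ s') :
    q.normSq s f ≤ q.normSq s' f := by
  rw [QForm.normSq, QForm.normSq]
  nlinarith [sq_nonneg ‖f‖]

include hlb in
lemma norm_sq_le_N1 {f : F} (hf : f ∈ q.dom) : ‖f‖ ^ 2 ≤ q.normSq (lam + 1) f := by
  have := hlb f hf
  rw [QForm.normSq]; nlinarith [this]

include hlb hS in
lemma NS_le_mul_N1 {f : F} (hf : f ∈ q.dom) :
    q.normSq S f ≤ (S - lam) * q.normSq (lam + 1) f := by
  have h1 := norm_sq_le_N1 hlb hf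
  rw [QForm.normSq, QForm.normSq] at *
  nlinarith [h1]

include hlb hS in
lemma NS_ge_norm {f : F} (hf : f ∈ q.dom) : (S - lam) * ‖f‖ ^ 2 ≤ q.normSq S f := by
  have := hlb f hf
  rw [QForm.normSq]
  nlinarith [sq_nonneg ‖f‖]

include hlb hS in
lemma NS_nonneg {f : F} (hf : f ∈ q.dom) : 0 ≤ q.normSq S f := by
  have h := NS_ge_norm hlb hS hf
  nlinarith [sq_nonneg ‖f‖]

include hlb hS in
lemma closed_limit (hcl : q.ClosedWith (lam + 1)) (u : ℕ → F) (hu : ∀ n, u n ∈ q.dom)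
    (hC : ∀ ε > (0 : ℝ), ∃ N, ∀ i ≥ N, ∀ j ≥ N, q.normSq S (u i - u j) < ε) :
    ∃ v ∈ q.dom, Tendsto (fun n => q.normSq S (u n - v)) atTop (nhds 0) := by
  have hC1 : ∀ ε > (0 : ℝ), ∃ N, ∀ i ≥ N, ∀ j ≥ N, q.normSq (lam + 1) (u i - u j) < ε := by
    intro ε hε
    obtain ⟨N, hN⟩ := hC ε hε
    exact ⟨N, fun i hi j hj => lt_of_le_of_lt (normSq_le_shift hS) (hN i hi j hj)⟩
  obtain ⟨v, hv, htd⟩ := hcl u hu hC1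
  refine ⟨v, hv, ?_⟩
  have hbound : ∀ n, q.normSq S (u n - v) ≤ (S - lam) * q.normSq (lam + 1) (u n - v) :=
    fun n => NS_le_mul_N1 hlb hS (Submodule.sub_mem _ (hu n) hv)
  have hnn : ∀ n, 0 ≤ q.normSq S (u n - v) :=
    fun n => NS_nonneg hlb hS (Submodule.sub_mem _ (hu n) hv)
  have hconv : Tendsto (fun n => (S - lam) * q.normSq (lam + 1) (u n - v)) atTop (nhds 0) := by
    have := htd.const_mul (S - lam)
    simpa using this
  exact squeeze_zero hnn hbound hconv

include hlb hS in
/-- Existence of an (attained) minimizer of the distance to a midpoint-convex set. -/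
lemma exists_min (hcl : q.ClosedWith (lam + 1)) (K : Set F)
    (hKsub : ∀ k ∈ K, k ∈ q.dom)
    (hmid : ∀ a ∈ K, ∀ b ∈ K, (2⁻¹ : ℂ) • (a + b) ∈ K)
    (hne : K.Nonempty) {x : F} (hx : x ∈ q.dom) :
    ∃ v ∈ q.dom, ∃ c : ℝ, ∃ u : ℕ → F, (∀ n, u n ∈ K) ∧
      (∀ h ∈ K, c ≤ q.normSq S (x - h)) ∧ q.normSq S (x - v) ≤ c ∧
      Tendsto (fun n => q.normSq S (u n - v)) atTop (nhds 0) := by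
  classical
  set T : Set ℝ := (fun h => q.normSq S (x - h)) '' K with hT
  have hTne : T.Nonempty := hne.image _
  have hTbdd : BddBelow T := by
    refine ⟨0, fun y hy => ?_⟩
    obtain ⟨k, hk, rfl⟩ := hy
    exact NS_nonneg hlb hS (Submodule.sub_mem _ hx (hKsub k hk))
  set c := sInf T with hc
  have hcle : ∀ h ∈ K, c ≤ q.normSq S (x - h) := fun h hh => csInf_le hTbdd ⟨h, hh, rfl⟩
  have hc0 : 0 ≤ c := le_csInf hTne (by
    rintro y ⟨k, hk, rfl⟩
    exact NS_nonneg hlb hS (Submodule.sub_mem _ hx (hKsub k hk)))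
  have hsel : ∀ n : ℕ, ∃ h, h ∈ K ∧ q.normSq S (x - h) < c + 1 / (n + 1) := by
    intro n
    have hlt : c < c + 1 / (n + 1 : ℝ) := by
      have : (0:ℝ) < 1 / (n + 1 : ℝ) := by positivity
      linarith
    obtain ⟨y, ⟨k, hk, rfl⟩, hy⟩ := exists_lt_of_csInf_lt hTne hlt
    exact ⟨k, hk, hy⟩
  choose u hu husmall using hsel
  have humem : ∀ n, u n ∈ q.dom := fun n => hKsub _ (hu n)
  -- the minimizing sequence is Cauchy
  have hkey : ∀ i j : ℕ, q.normSq S (u i - u j) ≤ 2 / (i + 1) + 2 / (j + 1) := by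
    intro i j
    set m := (2⁻¹ : ℂ) • (u i + u j) with hm
    have hmK : m ∈ K := hmid _ (hu i) _ (hu j)
    have hmdom : m ∈ q.dom := hKsub _ hmK
    have hpar := N_par (q := q) (s := S) (Submodule.sub_mem _ hx (humem i))
      (Submodule.sub_mem _ hx (humem j))
    have e1 : (x - u i) + (x - u j) = (2 : ℂ) • (x - m) := by rw [hm]; module
    have e2 : (x - u i) - (x - u j) = -(u i - u j) := by abel
    rw [e1, e2, N_smul (2 : ℂ) (Submodule.sub_mem _ hx hmdom),
      N_neg (Submodule.sub_mem _ (humem i) (humem j))] at hpar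
    have h4 : ‖(2:ℂ)‖ ^ 2 = 4 := by
      rw [Complex.norm_ofNat]; norm_num
    rw [h4] at hpar
    have hmge := hcle m hmK
    have hi := husmall i
    have hj := husmall j
    have d1 : (2:ℝ) / ((i:ℝ)+1) = 2 * (1/((i:ℝ)+1)) := by ring
    have d2 : (2:ℝ) / ((j:ℝ)+1) = 2 * (1/((j:ℝ)+1)) := by ring
    rw [d1, d2]
    linarith
  obtain ⟨v, hv, htd⟩ := closed_limit hlb hS hcl u humem (by
    intro ε hε
    obtain ⟨N, hN⟩ := exists_nat_gt (4 / ε)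
    refine ⟨N, fun i hi j hj => ?_⟩
    have h1 : (2:ℝ) / (i + 1) ≤ 2 / (N + 1) := by
      apply div_le_div_of_nonneg_left (by norm_num) (by positivity)
      exact_mod_cast Nat.succ_le_succ hi
    have h2 : (2:ℝ) / (j + 1) ≤ 2 / (N + 1) := by
      apply div_le_div_of_nonneg_left (by norm_num) (by positivity)
      exact_mod_cast Nat.succ_le_succ hj
    have h3 : (4:ℝ) / (N + 1) < ε := by
      rw [div_lt_iff₀ (by positivity)]
      rw [div_lt_iff₀ hε] at hN
      nlinarith [hε]
    calc q.normSq S (u i - u j) ≤ 2 / (i + 1) + 2 / (j + 1) := hkey i j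
    _ ≤ 2 / (N+1) + 2 / (N+1) := by linarith
    _ = 4 / (N+1) := by ring
    _ < ε := h3)
  refine ⟨v, hv, c, u, hu, hcle, ?_, htd⟩
  -- N_S (x - v) ≤ c by continuity
  have hNnn : ∀ f ∈ q.dom, 0 ≤ q.normSq S f := fun f hf => NS_nonneg hlb hS hf
  have hstep : ∀ n : ℕ, Real.sqrt (q.normSq S (x - v)) ≤
      Real.sqrt (c + 1 / ((n:ℝ) + 1)) + Real.sqrt (q.normSq S (u n - v)) := by
    intro n
    have hdecomp : x - v = (x - u n) + (u n - v) := by abel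
    have h1 : Real.sqrt (q.normSq S (x - v)) ≤
        Real.sqrt (q.normSq S (x - u n)) + Real.sqrt (q.normSq S (u n - v)) := by
      rw [hdecomp]
      exact sqrtN_add_le hNnn (Submodule.sub_mem _ hx (humem n))
        (Submodule.sub_mem _ (humem n) hv)
    have h2 : Real.sqrt (q.normSq S (x - u n)) ≤ Real.sqrt (c + 1 / ((n:ℝ) + 1)) :=
      Real.sqrt_le_sqrt (le_of_lt (husmall n))
    linarith
  have hlim : Tendsto (fun n : ℕ => Real.sqrt (c + 1 / ((n:ℝ) + 1)) +
      Real.sqrt (q.normSq S (u n - v))) atTop (nhds (Real.sqrt c)) := by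
    have l1 : Tendsto (fun n : ℕ => c + 1 / ((n : ℝ) + 1)) atTop (nhds c) := by
      have := tendsto_one_div_add_atTop_nhds_zero_nat (𝕜 := ℝ)
      have := (tendsto_const_nhds (x := c) (f := atTop (α := ℕ))).add this
      simpa using this
    have l2 : Tendsto (fun n : ℕ => Real.sqrt (c + 1 / ((n:ℝ) + 1))) atTop (nhds (Real.sqrt c)) :=
      (Real.continuous_sqrt.continuousAt.tendsto).comp l1
    have l3 : Tendsto (fun n => Real.sqrt (q.normSq S (u n - v))) atTop (nhds 0) := by
      have := (Real.continuous_sqrt.continuousAt.tendsto).comp htd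
      simpa [Real.sqrt_zero, Function.comp_def] using this
    have := l2.add l3
    simpa using this
  have hsqrt_le : Real.sqrt (q.normSq S (x - v)) ≤ Real.sqrt c :=
    ge_of_tendsto' hlim hstep
  have hfinal : q.normSq S (x - v) ≤ c := by
    have h1 : q.normSq S (x - v) = Real.sqrt (q.normSq S (x - v)) ^ 2 :=
      (Real.sq_sqrt (hNnn _ (Submodule.sub_mem _ hx hv))).symm
    rw [h1, ← Real.sq_sqrt hc0]
    exact pow_le_pow_left₀ (Real.sqrt_nonneg _) hsqrt_le 2
  exact hfinal

end shifts
end QFormAux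
end



noncomputable section
namespace StmtAux
open Filter QFormAux

variable {X : Type*} [MeasurableSpace X] {μ : MeasureTheory.Measure X}

/-- The order/reality relation: `h` is a.e. real valued, nonnegative and dominated by `f`. -/
def Between (μ : MeasureTheory.Measure X) (f h : Lp ℂ 2 μ) : Prop :=
  ∀ᵐ x ∂μ, (h x).im = 0 ∧ 0 ≤ (h x).re ∧ (h x).re ≤ (f x).re

lemma lp_norm_le_of_ae {f g : Lp ℂ 2 μ}
    (h : ∀ᵐ x ∂μ, ‖f x‖ ≤ ‖g x‖) : ‖f‖ ≤ ‖g‖ := by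
  rw [Lp.norm_def, Lp.norm_def]
  have h' : ∀ᵐ x ∂μ, ‖f x‖ ≤ ‖g x‖ := by
    filter_upwards [h] with x hx
    exact hx
  exact ENNReal.toReal_mono (Lp.eLpNorm_ne_top g) (eLpNorm_mono_ae h')

lemma lp_norm_eq_of_ae {f g : Lp ℂ 2 μ}
    (h : ∀ᵐ x ∂μ, ‖f x‖ = ‖g x‖) : ‖f‖ = ‖g‖ := by
  rw [Lp.norm_def, Lp.norm_def]
  have h' : ∀ᵐ x ∂μ, ‖f x‖ = ‖g x‖ := by
    filter_upwards [h] with x hx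
    exact hx
  rw [eLpNorm_congr_norm_ae h']

variable {b : QForm (Lp ℂ 2 μ)} {lamb S : ℝ}

section BD
variable (hBD : b.BeurlingDeny)
  (hblb : ∀ f ∈ b.dom, -lamb * ‖f‖ ^ 2 ≤ b.Q f) (hS : lamb + 1 ≤ S)

include hBD hblb hS in
lemma exists_conj {w : Lp ℂ 2 μ} (hw : w ∈ b.dom) :
    ∃ w' ∈ b.dom, (∀ᵐ x ∂μ, w' x = (starRingEnd ℂ) (w x)) ∧
      b.normSq S w' = b.normSq S w := by
  obtain ⟨g, hg, hae, hQ⟩ := hBD.1 w hw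
  refine ⟨g, hg, hae, ?_⟩
  have hnorm : ‖g‖ = ‖w‖ := by
    apply lp_norm_eq_of_ae
    filter_upwards [hae] with x hx
    rw [hx]
    simp
  rw [QForm.normSq, QForm.normSq, hQ, hnorm]

include hBD hblb hS in
lemma exists_abs {w : Lp ℂ 2 μ} (hw : w ∈ b.dom) :
    ∃ aw ∈ b.dom, (∀ᵐ x ∂μ, aw x = ((‖w x‖ : ℝ) : ℂ)) ∧
      b.normSq S aw ≤ b.normSq S w := by
  obtain ⟨g, hg, hae, hQ⟩ := hBD.2 w hw
  refine ⟨g, hg, hae, ?_⟩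
  have hnorm : ‖g‖ = ‖w‖ := by
    apply lp_norm_eq_of_ae
    filter_upwards [hae] with x hx
    rw [hx]
    simp
  rw [QForm.normSq, QForm.normSq, hnorm]
  linarith

include hBD hblb hS in
lemma exists_re {w : Lp ℂ 2 μ} (hw : w ∈ b.dom) :
    ∃ r ∈ b.dom, (∀ᵐ x ∂μ, r x = ((w x).re : ℂ)) ∧
      b.normSq S r ≤ b.normSq S w := by
  obtain ⟨w', hw', hae, hN⟩ := exists_conj hBD hblb hS hw
  refine ⟨(2⁻¹ : ℂ) • (w + w'), Submodule.smul_mem _ _ (Submodule.add_mem _ hw hw'), ?_, ?_⟩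
  · filter_upwards [hae, Lp.coeFn_smul (2⁻¹ : ℂ) (w + w'), Lp.coeFn_add w w'] with x hx h1 h2
    rw [h1, Pi.smul_apply, h2, Pi.add_apply, hx]
    rw [Complex.ext_iff]
    constructor
    · simp [Complex.smul_re]
      ring
    · simp [Complex.smul_im]
  · have hnn : ∀ f ∈ b.dom, 0 ≤ b.normSq S f := fun f hf => NS_nonneg hblb hS hf
    have hpar := N_par (q := b) (s := S) hw hw'
    have h0 := hnn _ (Submodule.sub_mem _ hw hw')
    have hsm := N_smul (q := b) (s := S) (2⁻¹ : ℂ) (Submodule.add_mem _ hw hw')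
    have h14 : ‖(2⁻¹ : ℂ)‖ ^ 2 = 4⁻¹ := by
      rw [norm_inv]
      norm_num
    rw [h14] at hsm
    rw [hsm]
    linarith

end BD
end StmtAux
end



noncomputable section
namespace StmtAux
open Filter QFormAux

variable {X : Type*} [MeasurableSpace X] {μ : MeasureTheory.Measure X}
variable {b : QForm (Lp ℂ 2 μ)} {lamb S : ℝ}
variable {Db : Submodule ℂ (Lp ℂ 2 μ)}

/-- Real arithmetic: `(t + |t|)/2 = max t 0`. -/
lemma half_add_abs (t : ℝ) : 2⁻¹ * (t + |t|) = max t 0 := by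
  rcases le_total t 0 with h | h
  · rw [abs_of_nonpos h, max_eq_right h]; ring
  · rw [abs_of_nonneg h, max_eq_left h]; ring

/-- Real arithmetic: `(a + b - |a - b|)/2 = min a b`. -/
lemma half_sub_abs (a c : ℝ) : 2⁻¹ * (a + c - |a - c|) = min a c := by
  rcases le_total a c with h | h
  · rw [abs_of_nonpos (by linarith), min_eq_left h]; ring
  · rw [abs_of_nonneg (by linarith), min_eq_right h]; ring

section Approx
variable (hBD : b.BeurlingDeny)
  (hblb : ∀ f ∈ b.dom, -lamb * ‖f‖ ^ 2 ≤ b.Q f) (hS : lamb + 1 ≤ S)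
  (hDb : Db ≤ b.dom)
  (hDbIdeal : ∀ f ∈ Db, ∀ g ∈ b.dom,
      (∀ᵐ x ∂μ, ‖g x‖ ≤ ‖f x‖) → g ∈ Db)

include hBD hblb hS hDb hDbIdeal in
lemma approx {f g : Lp ℂ 2 μ} (hf : f ∈ b.dom)
    (hfpos : ∀ᵐ x ∂μ, (f x).im = 0 ∧ 0 ≤ (f x).re) (hg : g ∈ Db) :
    ∃ h, h ∈ Db ∧ h ∈ b.dom ∧ Between μ f h ∧
      ‖f - h‖ ≤ Real.sqrt (b.normSq S (f - g)) ∧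
      Real.sqrt (b.normSq S (f - h)) ≤
        Real.sqrt (b.normSq S f) + 2 * Real.sqrt (b.normSq S (f - g)) := by
  classical
  have hgdom : g ∈ b.dom := hDb hg
  have hnn : ∀ w ∈ b.dom, 0 ≤ b.normSq S w := fun w hw => NS_nonneg hblb hS hw
  have hfg : f - g ∈ b.dom := Submodule.sub_mem _ hf hgdom
  set δ := Real.sqrt (b.normSq S (f - g)) with hδ
  have hδ0 : 0 ≤ δ := Real.sqrt_nonneg _
  -- real part element
  obtain ⟨r, hrdom, hrae, hrN⟩ := exists_re hBD hblb hS hfg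
  set u : Lp ℂ 2 μ := f - r with hudef
  have hudom : u ∈ b.dom := Submodule.sub_mem _ hf hrdom
  have hu_ae : ∀ᵐ x ∂μ, u x = (((g : Lp ℂ 2 μ) x).re : ℂ) := by
    filter_upwards [Lp.coeFn_sub f r, Lp.coeFn_sub f g, hrae, hfpos] with x h1 h2 h3 h4
    rw [hudef] at *
    rw [h1, Pi.sub_apply, h3, h2, Pi.sub_apply]
    have hfx : (f x : ℂ) = ((f x).re : ℂ) := by
      rw [Complex.ext_iff]; constructor <;> simp [h4.1]
    rw [Complex.sub_re]
    rw [Complex.ext_iff]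
    constructor <;> simp [h4.1]
  -- |u|
  obtain ⟨au, haudom, hauae, hauN⟩ := exists_abs hBD hblb hS hudom
  have hau_ae : ∀ᵐ x ∂μ, au x = ((|((g : Lp ℂ 2 μ) x).re| : ℝ) : ℂ) := by
    filter_upwards [hauae, hu_ae] with x h1 h2
    rw [h1, h2, Complex.norm_real, Real.norm_eq_abs]
  -- positive part p of u
  set p : Lp ℂ 2 μ := (2⁻¹ : ℂ) • (u + au) with hpdef
  have hpdom : p ∈ b.dom := Submodule.smul_mem _ _ (Submodule.add_mem _ hudom haudom)
  have hp_ae : ∀ᵐ x ∂μ, p x = ((max ((g : Lp ℂ 2 μ) x).re 0 : ℝ) : ℂ) := by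
    filter_upwards [Lp.coeFn_smul (2⁻¹ : ℂ) (u + au), Lp.coeFn_add u au, hu_ae, hau_ae]
      with x h1 h2 h3 h4
    rw [hpdef] at *
    rw [h1, Pi.smul_apply, h2, Pi.add_apply, h3, h4, smul_eq_mul, ← half_add_abs]
    push_cast
    ring
  have hpN : b.normSq S p ≤ b.normSq S u := by
    have hpar := N_par (q := b) (s := S) hudom haudom
    have h0 := hnn _ (Submodule.sub_mem _ hudom haudom)
    have hsm := N_smul (q := b) (s := S) (2⁻¹ : ℂ) (Submodule.add_mem _ hudom haudom)
    have h14 : ‖(2⁻¹ : ℂ)‖ ^ 2 = 4⁻¹ := by rw [norm_inv]; norm_num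
    rw [h14] at hsm
    rw [hpdef, hsm]
    linarith
  -- |p - f|
  obtain ⟨ad, haddom, hadae, hadN⟩ := exists_abs hBD hblb hS (Submodule.sub_mem _ hpdom hf)
  have had_ae : ∀ᵐ x ∂μ, ad x =
      ((|max ((g : Lp ℂ 2 μ) x).re 0 - (f x).re| : ℝ) : ℂ) := by
    filter_upwards [hadae, Lp.coeFn_sub p f, hp_ae, hfpos] with x h1 h2 h3 h4
    rw [h1, h2, Pi.sub_apply, h3]
    have hfx : (f x : ℂ) = ((f x).re : ℂ) := by
      rw [Complex.ext_iff]; constructor <;> simp [h4.1]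
    rw [hfx, ← Complex.ofReal_sub, Complex.norm_real, Real.norm_eq_abs]
    simp [Complex.ofReal_re]
  -- h := min(p, f)
  set h : Lp ℂ 2 μ := (2⁻¹ : ℂ) • (p + f - ad) with hhdef
  have hhdom : h ∈ b.dom :=
    Submodule.smul_mem _ _ (Submodule.sub_mem _ (Submodule.add_mem _ hpdom hf) haddom)
  have hh_ae : ∀ᵐ x ∂μ, h x =
      ((min (max ((g : Lp ℂ 2 μ) x).re 0) (f x).re : ℝ) : ℂ) := by
    filter_upwards [Lp.coeFn_smul (2⁻¹ : ℂ) (p + f - ad), Lp.coeFn_sub (p + f) ad,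
      Lp.coeFn_add p f, hp_ae, had_ae, hfpos] with x h1 h2 h3 h4 h5 h6
    rw [hhdef] at *
    rw [h1, Pi.smul_apply, h2, Pi.sub_apply, h3, Pi.add_apply, h4, h5]
    have hfx : (f x : ℂ) = ((f x).re : ℂ) := by
      rw [Complex.ext_iff]; constructor <;> simp [h6.1]
    rw [hfx, smul_eq_mul, ← half_sub_abs]
    simp only [Complex.ofReal_re]
    push_cast
    ring
  have hBetween : Between μ f h := by
    filter_upwards [hh_ae, hfpos] with x h1 h2
    rw [h1]
    refine ⟨by simp, by simp [le_min_iff, le_max_iff, h2.2], ?_⟩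
    simp [min_le_iff]
  have hhDb : h ∈ Db := by
    refine hDbIdeal g hg h hhdom ?_
    filter_upwards [hh_ae, hfpos] with x h1 h2
    rw [h1, Complex.norm_real, Real.norm_eq_abs]
    have hm : 0 ≤ min (max ((g : Lp ℂ 2 μ) x).re 0) (f x).re :=
      le_min (le_max_right _ _) h2.2
    rw [abs_of_nonneg hm]
    calc min (max ((g : Lp ℂ 2 μ) x).re 0) (f x).re ≤ max ((g : Lp ℂ 2 μ) x).re 0 :=
          min_le_left _ _
    _ ≤ |((g : Lp ℂ 2 μ) x).re| := by
        rcases le_total ((g : Lp ℂ 2 μ) x).re 0 with hc | hc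
        · rw [max_eq_right hc]; exact abs_nonneg _
        · rw [max_eq_left hc, abs_of_nonneg hc]
    _ ≤ ‖(g : Lp ℂ 2 μ) x‖ := Complex.abs_re_le_norm _
  -- L² estimate : ‖f - h‖ ≤ ‖r‖ ≤ δ
  have hfu : f - u = r := by rw [hudef]; abel
  have hL2 : ‖f - h‖ ≤ δ := by
    have hptw : ∀ᵐ x ∂μ, ‖(f - h) x‖ ≤ ‖r x‖ := by
      filter_upwards [Lp.coeFn_sub f h, hh_ae, hfpos, hrae, Lp.coeFn_sub f g] with x h1 h2 h3 h4 h5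
      rw [h1, Pi.sub_apply, h2]
      have hfx : (f x : ℂ) = ((f x).re : ℂ) := by
        rw [Complex.ext_iff]; constructor <;> simp [h3.1]
      rw [hfx, ← Complex.ofReal_sub, Complex.norm_real, Real.norm_eq_abs, h4, h5, Pi.sub_apply,
        Complex.sub_re, Complex.norm_real, Real.norm_eq_abs]
      simp only [Complex.ofReal_re]
      set t := ((g : Lp ℂ 2 μ) x).re
      set a := (f x).re
      have ha : 0 ≤ a := h3.2
      rcases le_total t 0 with hc | hc
      · rw [max_eq_right hc, min_eq_left ha, sub_zero, abs_of_nonneg ha,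
          abs_of_nonneg (by linarith : (0:ℝ) ≤ a - t)]
        linarith
      · rw [max_eq_left hc]
        rcases le_total t a with hd | hd
        · rw [min_eq_left hd]
        · rw [min_eq_right hd, sub_self, abs_zero]
          exact abs_nonneg _
    calc ‖f - h‖ ≤ ‖r‖ := lp_norm_le_of_ae hptw
    _ ≤ Real.sqrt (b.normSq S r) := by
        have h1 : (S - lamb) * ‖r‖ ^ 2 ≤ b.normSq S r := NS_ge_norm hblb hS hrdom
        have h2 : ‖r‖ ^ 2 ≤ b.normSq S r := by nlinarith [sq_nonneg ‖r‖]
        calc ‖r‖ = Real.sqrt (‖r‖ ^ 2) := by rw [Real.sqrt_sq (norm_nonneg _)]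
        _ ≤ Real.sqrt (b.normSq S r) := Real.sqrt_le_sqrt h2
    _ ≤ δ := Real.sqrt_le_sqrt hrN
  -- form-norm estimate
  have hsN : Real.sqrt (b.normSq S (f - h)) ≤ Real.sqrt (b.normSq S f) + 2 * δ := by
    have hhalf : ∀ z ∈ b.dom, Real.sqrt (b.normSq S ((2⁻¹ : ℂ) • z)) =
        2⁻¹ * Real.sqrt (b.normSq S z) := by
      intro z hz
      have hsm := N_smul (q := b) (s := S) (2⁻¹ : ℂ) hz
      have h14 : ‖(2⁻¹ : ℂ)‖ ^ 2 = 4⁻¹ := by rw [norm_inv]; norm_num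
      rw [h14] at hsm
      rw [hsm, Real.sqrt_mul (by norm_num)]
      have : Real.sqrt 4⁻¹ = 2⁻¹ := by
        rw [show (4:ℝ)⁻¹ = 2⁻¹ ^ 2 by norm_num, Real.sqrt_sq (by norm_num)]
      rw [this]
    have hrδ : Real.sqrt (b.normSq S r) ≤ δ := Real.sqrt_le_sqrt hrN
    have huB : Real.sqrt (b.normSq S u) ≤ Real.sqrt (b.normSq S f) + δ := by
      have h1 := sqrtN_sub_le hnn hf hrdom
      rw [← hudef] at h1
      linarith
    have hauB : Real.sqrt (b.normSq S au) ≤ Real.sqrt (b.normSq S u) :=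
      Real.sqrt_le_sqrt hauN
    have hfau : Real.sqrt (b.normSq S (f - au)) ≤
        δ + Real.sqrt (b.normSq S u) + Real.sqrt (b.normSq S au) := by
      have he : f - au = r + (u - au) := by rw [hudef]; abel
      have h1 : Real.sqrt (b.normSq S (f - au)) ≤
          Real.sqrt (b.normSq S r) + Real.sqrt (b.normSq S (u - au)) := by
        rw [he]
        exact sqrtN_add_le hnn hrdom (Submodule.sub_mem _ hudom haudom)
      have h2 := sqrtN_sub_le hnn hudom haudom
      linarith
    have hfp : Real.sqrt (b.normSq S (f - p)) ≤
        2⁻¹ * (Real.sqrt (b.normSq S r) + Real.sqrt (b.normSq S (f - au))) := by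
      have he2 : f - p = (2⁻¹ : ℂ) • (r + (f - au)) := by
        rw [hpdef, hudef]; module
      rw [he2, hhalf _ (Submodule.add_mem _ hrdom (Submodule.sub_mem _ hf haudom))]
      have h1 := sqrtN_add_le hnn hrdom (Submodule.sub_mem _ hf haudom)
      linarith
    have hadB : Real.sqrt (b.normSq S ad) ≤ Real.sqrt (b.normSq S (f - p)) := by
      have h1 : b.normSq S (p - f) = b.normSq S (f - p) := by
        have := N_neg (q := b) (s := S) (Submodule.sub_mem _ hf hpdom)
        rw [show -(f - p) = p - f by abel] at this
        linarith [this]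
      exact Real.sqrt_le_sqrt (by rw [← h1]; exact hadN)
    have hfh2 : f - h = (2⁻¹ : ℂ) • ((f - p) + ad) := by
      rw [hhdef]; module
    have hmain : Real.sqrt (b.normSq S (f - h)) ≤ Real.sqrt (b.normSq S (f - p)) := by
      rw [hfh2, hhalf _ (Submodule.add_mem _ (Submodule.sub_mem _ hf hpdom) haddom)]
      have h1 := sqrtN_add_le hnn (Submodule.sub_mem _ hf hpdom) haddom
      linarith
    linarith
  exact ⟨h, hhDb, hhdom, hBetween, hL2, hsN⟩

end Approx
end StmtAux
end



noncomputable section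
namespace StmtAux
open Filter QFormAux

variable {X : Type*} [MeasurableSpace X] {μ : MeasureTheory.Measure X}
variable {b : QForm (Lp ℂ 2 μ)} {lamb S : ℝ}
variable {Db : Submodule ℂ (Lp ℂ 2 μ)}

section BSide
variable (hBD : b.BeurlingDeny)
  (hblb : ∀ f ∈ b.dom, -lamb * ‖f‖ ^ 2 ≤ b.Q f) (hS : lamb + 1 ≤ S)
  (hDb : Db ≤ b.dom)
  (hDbIdeal : ∀ f ∈ Db, ∀ g ∈ b.dom,
      (∀ᵐ x ∂μ, ‖g x‖ ≤ ‖f x‖) → g ∈ Db)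
  (hbclosed : b.ClosedWith (lamb + 1))
  (hDbdense : ∀ f ∈ b.dom, ∀ ε > (0 : ℝ), ∃ g ∈ Db, b.normSq (lamb + 1) (f - g) < ε)

set_option maxHeartbeats 2000000 in
include hBD hblb hS hDb hDbIdeal hbclosed hDbdense in
/-- The key `b`-side lemma: a nonnegative `f ∈ D(b)` whose `B`-pairing with every
element of `D_b` between `0` and `f` is nonpositive must vanish. -/
lemma bside {f : Lp ℂ 2 μ} (hf : f ∈ b.dom)
    (hfpos : ∀ᵐ x ∂μ, (f x).im = 0 ∧ 0 ≤ (f x).re)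
    (hdag : ∀ h, h ∈ Db → Between μ f h → Bl b S f h ≤ 0) : f = 0 := by
  classical
  have hnn : ∀ w ∈ b.dom, 0 ≤ b.normSq S w := fun w hw => NS_nonneg hblb hS hw
  have hSl : (1 : ℝ) ≤ S - lamb := by linarith
  have hnormle : ∀ w ∈ b.dom, ‖w‖ ≤ Real.sqrt (b.normSq S w) := by
    intro w hw
    have h1 : (S - lamb) * ‖w‖ ^ 2 ≤ b.normSq S w := NS_ge_norm hblb hS hw
    have h2 : ‖w‖ ^ 2 ≤ b.normSq S w := by nlinarith [sq_nonneg ‖w‖]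
    calc ‖w‖ = Real.sqrt (‖w‖ ^ 2) := by rw [Real.sqrt_sq (norm_nonneg _)]
    _ ≤ _ := Real.sqrt_le_sqrt h2
  -- Step 1: approximating sequence
  have hseq : ∀ m : ℕ, ∃ h, h ∈ Db ∧ h ∈ b.dom ∧ Between μ f h ∧
      ‖f - h‖ ^ 2 ≤ (2⁻¹ : ℝ) ^ m ∧
      Real.sqrt (b.normSq S (f - h)) ≤ Real.sqrt (b.normSq S f) + 2 := by
    intro m
    set ε : ℝ := min ((2⁻¹ : ℝ) ^ m) 1 / (S - lamb) with hε
    have hεpos : 0 < ε := by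
      apply div_pos (lt_min (by positivity) one_pos) (by linarith)
    obtain ⟨g, hgDb, hgN⟩ := hDbdense f hf ε hεpos
    have hfg : f - g ∈ b.dom := Submodule.sub_mem _ hf (hDb hgDb)
    have hNBfg : b.normSq S (f - g) ≤ min ((2⁻¹ : ℝ) ^ m) 1 := by
      have h1 : b.normSq S (f - g) ≤ (S - lamb) * b.normSq (lamb + 1) (f - g) :=
        NS_le_mul_N1 hblb hS hfg
      have h2 : (S - lamb) * b.normSq (lamb + 1) (f - g) ≤ (S - lamb) * ε := by
        apply mul_le_mul_of_nonneg_left (le_of_lt hgN) (by linarith)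
      have h3 : (S - lamb) * ε = min ((2⁻¹ : ℝ) ^ m) 1 := by
        rw [hε, mul_div_cancel₀]
        linarith
      linarith
    obtain ⟨h, hhDb, hhdom, hbet, hl2, hNB⟩ := approx hBD hblb hS hDb hDbIdeal hf hfpos hgDb
    refine ⟨h, hhDb, hhdom, hbet, ?_, ?_⟩
    · have h1 : ‖f - h‖ ^ 2 ≤ Real.sqrt (b.normSq S (f - g)) ^ 2 :=
        pow_le_pow_left₀ (norm_nonneg _) hl2 2
      rw [Real.sq_sqrt (hnn _ hfg)] at h1
      exact h1.trans (hNBfg.trans (min_le_left _ _))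
    · have h1 : Real.sqrt (b.normSq S (f - g)) ≤ 1 := by
        rw [show (1:ℝ) = Real.sqrt 1 by rw [Real.sqrt_one]]
        exact Real.sqrt_le_sqrt (hNBfg.trans (min_le_right _ _))
      linarith
  choose hh hhDb hhdom hhbet hhl2 hhNB using hseq
  -- Step 2: the nested convex sets and distances
  set Km : ℕ → Set (Lp ℂ 2 μ) := fun m =>
    {h | h ∈ Db ∧ Between μ f h ∧ ‖f - h‖ ^ 2 ≤ (2⁻¹ : ℝ) ^ m} with hKm
  have hKmsub : ∀ m, ∀ k ∈ Km m, k ∈ b.dom := fun m k hk => hDb hk.1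
  have hKmne : ∀ m, (hh m) ∈ Km m := fun m => ⟨hhDb m, hhbet m, hhl2 m⟩
  have hKmnested : ∀ {i j : ℕ}, i ≤ j → Km j ⊆ Km i := by
    intro i j hij k hk
    refine ⟨hk.1, hk.2.1, hk.2.2.trans ?_⟩
    exact pow_le_pow_of_le_one (by norm_num) (by norm_num) hij
  set c : ℕ → ℝ := fun m => sInf ((fun k => b.normSq S (f - k)) '' Km m) with hc
  have hbddB : ∀ m, BddBelow ((fun k => b.normSq S (f - k)) '' Km m) := by
    intro m
    refine ⟨0, fun y hy => ?_⟩
    obtain ⟨k, hk, rfl⟩ := hy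
    exact hnn _ (Submodule.sub_mem _ hf (hKmsub m k hk))
  have hcle : ∀ m, ∀ k ∈ Km m, c m ≤ b.normSq S (f - k) :=
    fun m k hk => csInf_le (hbddB m) ⟨k, hk, rfl⟩
  have hKmImne : ∀ m : ℕ, ((fun k => b.normSq S (f - k)) '' Km m).Nonempty :=
    fun m => ⟨b.normSq S (f - hh m), ⟨hh m, hKmne m, rfl⟩⟩
  have hc0 : ∀ m, 0 ≤ c m := by
    intro m
    apply le_csInf (hKmImne m)
    rintro y ⟨k, hk, rfl⟩
    exact hnn _ (Submodule.sub_mem _ hf (hKmsub m k hk))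
  set C : ℝ := (Real.sqrt (b.normSq S f) + 2) ^ 2 with hC
  have hcC : ∀ m, c m ≤ C := by
    intro m
    refine (hcle m (hh m) (hKmne m)).trans ?_
    have h1 : b.normSq S (f - hh m) = Real.sqrt (b.normSq S (f - hh m)) ^ 2 :=
      (Real.sq_sqrt (hnn _ (Submodule.sub_mem _ hf (hhdom m)))).symm
    rw [h1, hC]
    exact pow_le_pow_left₀ (Real.sqrt_nonneg _) (hhNB m) 2
  have hcmono : Monotone c := by
    intro i j hij
    exact csInf_le_csInf (hbddB i) (hKmImne j) (Set.image_mono (hKmnested hij))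
  set cs : ℝ := ⨆ m, c m with hcs
  have hbddA : BddAbove (Set.range c) := ⟨C, by rintro y ⟨m, rfl⟩; exact hcC m⟩
  have hccs : ∀ m, c m ≤ cs := fun m => le_ciSup hbddA m
  -- Step 3: minimizing selection
  have hsel : ∀ m : ℕ, ∃ θ, θ ∈ Km m ∧ b.normSq S (f - θ) < c m + 1 / (m + 1) := by
    intro m
    have hlt : c m < c m + 1 / (m + 1 : ℝ) := by
      have : (0:ℝ) < 1 / (m + 1 : ℝ) := by positivity
      linarith
    obtain ⟨y, ⟨k, hk, rfl⟩, hy⟩ := exists_lt_of_csInf_lt (hKmImne m) hlt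
    exact ⟨k, hk, hy⟩
  choose θ hθK hθsmall using hsel
  have hθdom : ∀ m, θ m ∈ b.dom := fun m => hKmsub m _ (hθK m)
  -- Step 4: midpoints stay in the sets
  have hmid : ∀ {i j : ℕ}, i ≤ j → (2⁻¹ : ℂ) • (θ i + θ j) ∈ Km i := by
    intro i j hij
    have hiK := hθK i
    have hjK := hKmnested hij (hθK j)
    refine ⟨Submodule.smul_mem _ _ (Submodule.add_mem _ hiK.1 hjK.1), ?_, ?_⟩
    · filter_upwards [Lp.coeFn_smul (2⁻¹ : ℂ) (θ i + θ j), Lp.coeFn_add (θ i) (θ j),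
        hiK.2.1, hjK.2.1] with x h1 h2 h3 h4
      rw [h1, Pi.smul_apply, h2, Pi.add_apply, smul_eq_mul]
      constructor
      · rw [Complex.mul_im]
        simp [Complex.add_im, h3.1, h4.1]
      constructor
      · rw [Complex.mul_re]
        simp only [Complex.add_re, Complex.add_im, h3.1, h4.1]
        norm_num
        nlinarith [h3.2.1, h4.2.1]
      · rw [Complex.mul_re]
        simp only [Complex.add_re, Complex.add_im, h3.1, h4.1]
        norm_num
        nlinarith [h3.2.2, h4.2.2]
    · have he : f - (2⁻¹ : ℂ) • (θ i + θ j) = (2⁻¹ : ℂ) • ((f - θ i) + (f - θ j)) := by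
        module
      rw [he]
      have hnsm : ‖(2⁻¹ : ℂ) • ((f - θ i) + (f - θ j))‖ =
          2⁻¹ * ‖(f - θ i) + (f - θ j)‖ := by
        rw [norm_smul]
        norm_num
      rw [hnsm]
      have htri : ‖(f - θ i) + (f - θ j)‖ ≤ ‖f - θ i‖ + ‖f - θ j‖ := norm_add_le _ _
      have h2i : ‖f - θ i‖ ^ 2 ≤ (2⁻¹:ℝ) ^ i := hiK.2.2
      have h2j : ‖f - θ j‖ ^ 2 ≤ (2⁻¹:ℝ) ^ i := hjK.2.2
      have hni := norm_nonneg (f - θ i)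
      have hnj := norm_nonneg (f - θ j)
      rw [mul_pow]
      nlinarith [sq_nonneg (‖f - θ i‖ - ‖f - θ j‖), htri, norm_nonneg ((f - θ i) + (f - θ j))]
  -- Step 5: Cauchy estimate
  have hkey : ∀ i j : ℕ, i ≤ j → b.normSq S (θ i - θ j) ≤
      2 * (cs - c i) + 2 * (1 / (i + 1)) + 2 * (1 / (j + 1)) := by
    intro i j hij
    set m := (2⁻¹ : ℂ) • (θ i + θ j) with hm
    have hmK := hmid hij
    have hmdom : m ∈ b.dom := hKmsub i _ hmK
    have hpar := N_par (q := b) (s := S) (Submodule.sub_mem _ hf (hθdom i))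
      (Submodule.sub_mem _ hf (hθdom j))
    have e1 : (f - θ i) + (f - θ j) = (2 : ℂ) • (f - m) := by rw [hm]; module
    have e2 : (f - θ i) - (f - θ j) = -(θ i - θ j) := by abel
    rw [e1, e2, N_smul (2 : ℂ) (Submodule.sub_mem _ hf hmdom),
      N_neg (Submodule.sub_mem _ (hθdom i) (hθdom j))] at hpar
    have h4 : ‖(2:ℂ)‖ ^ 2 = 4 := by rw [Complex.norm_ofNat]; norm_num
    rw [h4] at hpar
    have hmge := hcle i m hmK
    have hi := hθsmall i
    have hj := hθsmall j
    have hcj : c j ≤ cs := hccs j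
    linarith
  -- Step 6:限 limit exists by closedness
  obtain ⟨v, hvdom, hvtd⟩ := closed_limit hblb hS hbclosed θ hθdom (by
    intro ε hε
    -- choose m₀ with cs - c m₀ small and 1/(m₀+1) small
    have h8 : 0 < ε / 8 := by linarith
    obtain ⟨m₁, hm₁⟩ : ∃ m₁ : ℕ, cs - ε / 8 < c m₁ := by
      by_contra hcon
      push_neg at hcon
      have : cs ≤ cs - ε / 8 := by
        apply ciSup_le
        intro m
        exact hcon m
      linarith
    obtain ⟨m₂, hm₂⟩ := exists_nat_gt (8 / ε)
    set N := max m₁ m₂ with hN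
    refine ⟨N, fun i hi j hj => ?_⟩
    have hbound : ∀ i j : ℕ, N ≤ i → i ≤ j → b.normSq S (θ i - θ j) < ε := by
      intro i j hNi hij
      have hci : cs - c i ≤ ε / 8 := by
        have h1 : c m₁ ≤ c i := hcmono ((le_max_left m₁ m₂).trans hNi)
        linarith
      have hfr : ∀ k : ℕ, N ≤ k → (1:ℝ) / (k + 1) < ε / 8 := by
        intro k hk
        have h1 : (8:ℝ) / ε < m₂ + 1 := by
          have : (m₂:ℝ) < m₂ + 1 := by linarith
          linarith [hm₂]
        have h2 : (m₂:ℝ) + 1 ≤ k + 1 := by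
          have : (m₂:ℝ) ≤ k := by
            exact_mod_cast (le_max_right m₁ m₂).trans hk
          linarith
        rw [div_lt_iff₀ (by positivity)]
        rw [div_lt_iff₀ hε] at h1
        have h3 : (0:ℝ) < m₂ + 1 := by positivity
        nlinarith [h1, h2]
      have := hkey i j hij
      have hf1 := hfr i hNi
      have hf2 := hfr j (hNi.trans hij)
      linarith
    rcases le_total i j with hij | hji
    · exact hbound i j hi hij
    · have := hbound j i hj hji
      have hsym : b.normSq S (θ i - θ j) = b.normSq S (θ j - θ i) := by
        have := N_neg (q := b) (s := S) (Submodule.sub_mem _ (hθdom j) (hθdom i))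
        rw [show -(θ j - θ i) = θ i - θ j by abel] at this
        linarith
      linarith)
  -- Step 7: identify the limit with f
  have hθl2 : Tendsto (fun m => ‖f - θ m‖) atTop (nhds 0) := by
    have hb : ∀ m : ℕ, ‖f - θ m‖ ≤ Real.sqrt ((2⁻¹:ℝ) ^ m) := by
      intro m
      calc ‖f - θ m‖ = Real.sqrt (‖f - θ m‖ ^ 2) := by rw [Real.sqrt_sq (norm_nonneg _)]
      _ ≤ _ := Real.sqrt_le_sqrt (hθK m).2.2
    have hpow : Tendsto (fun m : ℕ => ((2:ℝ)⁻¹) ^ m) atTop (nhds 0) := by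
      apply tendsto_pow_atTop_nhds_zero_of_lt_one (by norm_num) (by norm_num)
    have hsq : Tendsto (fun m : ℕ => Real.sqrt ((2⁻¹:ℝ) ^ m)) atTop (nhds 0) := by
      have h2 := (Real.continuous_sqrt.tendsto 0).comp hpow
      simpa only [Function.comp_def, Real.sqrt_zero] using h2
    exact squeeze_zero (fun m => norm_nonneg _) hb hsq
  have hθv : Tendsto (fun m => ‖θ m - v‖) atTop (nhds 0) := by
    have hb : ∀ m : ℕ, ‖θ m - v‖ ≤ Real.sqrt (b.normSq S (θ m - v)) :=
      fun m => hnormle _ (Submodule.sub_mem _ (hθdom m) hvdom)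
    have hsq : Tendsto (fun m => Real.sqrt (b.normSq S (θ m - v))) atTop (nhds 0) := by
      have := (Real.continuous_sqrt.continuousAt.tendsto).comp hvtd
      simpa [Real.sqrt_zero, Function.comp_def] using this
    exact squeeze_zero (fun m => norm_nonneg _) hb hsq
  have hfv : f = v := by
    have hb : ∀ m : ℕ, ‖f - v‖ ≤ ‖f - θ m‖ + ‖θ m - v‖ := by
      intro m
      calc ‖f - v‖ = ‖(f - θ m) + (θ m - v)‖ := by rw [show f - v = (f - θ m) + (θ m - v) by abel]
      _ ≤ _ := norm_add_le _ _
    have hlim : Tendsto (fun m => ‖f - θ m‖ + ‖θ m - v‖) atTop (nhds 0) := by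
      have := hθl2.add hθv
      simpa using this
    have h0 : ‖f - v‖ ≤ 0 := ge_of_tendsto' hlim hb
    have : f - v = 0 := by
      rw [← norm_le_zero_iff]
      exact h0
    exact sub_eq_zero.mp this
  -- Step 8: f is approximated in form norm
  have hNBconv : Tendsto (fun m => b.normSq S (f - θ m)) atTop (nhds 0) := by
    have heq : ∀ m, b.normSq S (f - θ m) = b.normSq S (θ m - v) := by
      intro m
      rw [hfv]
      have := N_neg (q := b) (s := S) (Submodule.sub_mem _ (hθdom m) hvdom)
      rw [show -(θ m - v) = v - θ m by abel] at this
      linarith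
    simp_rw [heq]
    exact hvtd
  -- Step 9: conclusion
  have hfinal : ∀ m, b.normSq S f ≤
      Real.sqrt (b.normSq S f) * Real.sqrt (b.normSq S (f - θ m)) := by
    intro m
    have hd : Bl b S f (θ m) ≤ 0 := hdag (θ m) (hθK m).1 (hθK m).2.1
    have hsplit : Bl b S f f = Bl b S f (θ m) + Bl b S f (f - θ m) := by
      have := Bl_add_right (q := b) (s := S) hf (hθdom m)
        (Submodule.sub_mem _ hf (hθdom m))
      rw [show θ m + (f - θ m) = f by abel] at this
      exact this
    have hself : Bl b S f f = b.normSq S f := Bl_self hf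
    have habs := Bl_abs_le_sqrt hnn hf (Submodule.sub_mem _ hf (hθdom m))
    have h1 : Bl b S f (f - θ m) ≤
        Real.sqrt (b.normSq S f) * Real.sqrt (b.normSq S (f - θ m)) :=
      (le_abs_self _).trans habs
    linarith
  have hNBf0 : b.normSq S f ≤ 0 := by
    have hlim : Tendsto (fun m => Real.sqrt (b.normSq S f) *
        Real.sqrt (b.normSq S (f - θ m))) atTop (nhds 0) := by
      have hsq : Tendsto (fun m => Real.sqrt (b.normSq S (f - θ m))) atTop (nhds 0) := by
        have := (Real.continuous_sqrt.continuousAt.tendsto).comp hNBconv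
        simpa [Real.sqrt_zero, Function.comp_def] using this
      have := hsq.const_mul (Real.sqrt (b.normSq S f))
      simpa using this
    exact ge_of_tendsto' hlim hfinal
  have h1 : (S - lamb) * ‖f‖ ^ 2 ≤ b.normSq S f := NS_ge_norm hblb hS hf
  have h2 : ‖f‖ = 0 := by
    nlinarith [sq_nonneg ‖f‖, norm_nonneg f]
  exact norm_eq_zero.mp h2

end BSide
end StmtAux
end


/-- Theorem: uniqueness of form extensions via domination.
Let `|·| = A : H → L²₊(X,μ)` be an absolute pairing, `a` a lower bounded closed quadratic
form on `H`, `b` a lower bounded closed quadratic form on `L²(X,μ)` satisfying the first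
Beurling–Deny criterion, `D_a ⊆ D(a)` an ideal of `D(a)` and `D_b ⊆ D(b)` an ideal of
`D(b)`. Assume that `a` is dominated by `b` and `D_b⁺ ∩ |D(a)| ⊆ |D_a|`. If `D_b` is a
form core for `b`, then `D_a` is a form core for `a`. -/
theorem stmt0 {X : Type*} [MeasurableSpace X] {μ : MeasureTheory.Measure X}
    {H : Type*} [NormedAddCommGroup H] [InnerProductSpace ℂ H] [CompleteSpace H]
    (A : H → Lp ℂ 2 μ) (hA : IsAbsolutePairing μ A)
    (a : QForm H) (b : QForm (Lp ℂ 2 μ)) (lama lamb : ℝ)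
    (halb : ∀ ξ ∈ a.dom, -lama * ‖ξ‖ ^ 2 ≤ a.Q ξ)
    (hblb : ∀ f ∈ b.dom, -lamb * ‖f‖ ^ 2 ≤ b.Q f)
    (haclosed : a.ClosedWith (lama + 1)) (hbclosed : b.ClosedWith (lamb + 1))
    (hBD : b.BeurlingDeny)
    (Da : Submodule ℂ H) (Db : Submodule ℂ (Lp ℂ 2 μ))
    (hDa : Da ≤ a.dom) (hDb : Db ≤ b.dom)
    (hDaIdeal : ∀ ξ ∈ Da, ∀ η ∈ a.dom,
      (∀ᵐ x ∂μ, (A η x).re ≤ (A ξ x).re) → η ∈ Da)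
    (hDbIdeal : ∀ f ∈ Db, ∀ g ∈ b.dom,
      (∀ᵐ x ∂μ, ‖g x‖ ≤ ‖f x‖) → g ∈ Db)
    (hdom : DominatedBy μ A a b)
    (habs : ∀ f ∈ Db, AeNonneg μ f → (∃ ξ ∈ a.dom, A ξ = f) → ∃ ξ ∈ Da, A ξ = f)
    (hDbdense : ∀ f ∈ b.dom, ∀ ε > (0 : ℝ), ∃ g ∈ Db, b.normSq (lamb + 1) (f - g) < ε) :
    ∀ ξ ∈ a.dom, ∀ ε > (0 : ℝ), ∃ η ∈ Da, a.normSq (lama + 1) (ξ - η) < ε := by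
  classical
  intro ξ hξ ε hε
  set S : ℝ := max (lama + 1) (lamb + 1) with hSdef
  have hSa : lama + 1 ≤ S := le_max_left _ _
  have hSb : lamb + 1 ≤ S := le_max_right _ _
  have hnna : ∀ w ∈ a.dom, 0 ≤ a.normSq S w :=
    fun w hw => QFormAux.NS_nonneg halb hSa hw
  -- minimize the distance from ξ to D_a
  obtain ⟨v, hvdom, c, u, huK, hclb, hcub, hutd⟩ :=
    QFormAux.exists_min halb hSa haclosed (Da : Set H)
      (fun k hk => hDa hk)
      (fun p hp q' hq' => Submodule.smul_mem _ _ (Submodule.add_mem _ hp hq'))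
      ⟨0, Submodule.zero_mem _⟩ hξ
  set ζ : H := ξ - v with hζdef
  have hζdom : ζ ∈ a.dom := Submodule.sub_mem _ hξ hvdom
  have hc0 : 0 ≤ c := le_trans (hnna _ hζdom) hcub
  -- variational inequality
  have hvar : ∀ η ∈ Da, ∀ t : ℝ, c ≤ a.normSq S (ζ - (t : ℂ) • η) := by
    intro η hη t
    have hηdom : η ∈ a.dom := hDa hη
    have hζt : ζ - (t : ℂ) • η ∈ a.dom :=
      Submodule.sub_mem _ hζdom (Submodule.smul_mem _ _ hηdom)
    have hineq : ∀ n, Real.sqrt c - Real.sqrt (a.normSq S (u n - v)) ≤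
        Real.sqrt (a.normSq S (ζ - (t : ℂ) • η)) := by
      intro n
      have hKn : u n + (t : ℂ) • η ∈ Da := Submodule.add_mem _ (huK n) (Submodule.smul_mem _ _ hη)
      have hundom : u n ∈ a.dom := hDa (huK n)
      have h1 : c ≤ a.normSq S (ξ - (u n + (t : ℂ) • η)) := hclb _ hKn
      have hdecomp : ξ - (u n + (t : ℂ) • η) = (ζ - (t : ℂ) • η) + (v - u n) := by
        rw [hζdef]; abel
      have h2 : Real.sqrt (a.normSq S (ξ - (u n + (t : ℂ) • η))) ≤
          Real.sqrt (a.normSq S (ζ - (t : ℂ) • η)) + Real.sqrt (a.normSq S (v - u n)) := by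
        rw [hdecomp]
        exact QFormAux.sqrtN_add_le hnna hζt (Submodule.sub_mem _ hvdom hundom)
      have h3 : Real.sqrt c ≤ Real.sqrt (a.normSq S (ξ - (u n + (t : ℂ) • η))) :=
        Real.sqrt_le_sqrt h1
      have h4 : a.normSq S (v - u n) = a.normSq S (u n - v) := by
        have := QFormAux.N_neg (q := a) (s := S) (Submodule.sub_mem _ hundom hvdom)
        rw [show -(u n - v) = v - u n by abel] at this
        exact this
      rw [h4] at h2
      linarith
    have hlim : Filter.Tendsto (fun n => Real.sqrt c - Real.sqrt (a.normSq S (u n - v)))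
        Filter.atTop (nhds (Real.sqrt c)) := by
      have hsq : Filter.Tendsto (fun n => Real.sqrt (a.normSq S (u n - v)))
          Filter.atTop (nhds 0) := by
        have h2 := (Real.continuous_sqrt.tendsto 0).comp hutd
        simpa only [Function.comp_def, Real.sqrt_zero] using h2
      have := (tendsto_const_nhds (x := Real.sqrt c)
        (f := Filter.atTop (α := ℕ))).sub hsq
      simpa using this
    have h5 : Real.sqrt c ≤ Real.sqrt (a.normSq S (ζ - (t : ℂ) • η)) :=
      le_of_tendsto' hlim hineq
    calc c = Real.sqrt c ^ 2 := (Real.sq_sqrt hc0).symm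
    _ ≤ Real.sqrt (a.normSq S (ζ - (t : ℂ) • η)) ^ 2 :=
        pow_le_pow_left₀ (Real.sqrt_nonneg _) h5 2
    _ = a.normSq S (ζ - (t : ℂ) • η) := Real.sq_sqrt (hnna _ hζt)
  -- orthogonality
  have horth : ∀ η ∈ Da, QFormAux.Bl a S ζ η = 0 := by
    have hle : ∀ η ∈ Da, QFormAux.Bl a S ζ η ≤ 0 := by
      intro η hη
      have hηdom : η ∈ a.dom := hDa hη
      have hNη := hnna η hηdom
      apply le_of_forall_pos_le_add
      intro ε' hε'
      set t : ℝ := ε' / (a.normSq S η + 1) with ht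
      have ht0 : 0 < t := by positivity
      have hvar' := hvar η hη t
      have hexp : a.normSq S (ζ - (t : ℂ) • η) =
          a.normSq S ζ + t ^ 2 * a.normSq S η - 2 * (t * QFormAux.Bl a S ζ η) := by
        have h1 := QFormAux.N_sub_expand (s := S) hζdom (Submodule.smul_mem _ ((t:ℂ)) hηdom)
        have h2 : a.normSq S ((t : ℂ) • η) = t ^ 2 * a.normSq S η := by
          rw [QFormAux.N_smul _ hηdom, Complex.norm_real, Real.norm_eq_abs, sq_abs]
        have h3 : QFormAux.Bl a S ζ ((t : ℂ) • η) = t * QFormAux.Bl a S ζ η :=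
          QFormAux.Bl_real_smul hnna hζdom hηdom t
        rw [h1, h2, h3]
      have hNζ : a.normSq S ζ ≤ c := hcub
      rw [hexp] at hvar'
      have h6 : 2 * (t * QFormAux.Bl a S ζ η) ≤ t ^ 2 * a.normSq S η := by linarith
      have h7 : QFormAux.Bl a S ζ η ≤ t * a.normSq S η / 2 := by
        rw [pow_two] at h6
        nlinarith [h6, ht0]
      have h8 : t * a.normSq S η / 2 ≤ ε' := by
        rw [ht]
        rw [div_mul_eq_mul_div, div_div, div_le_iff₀ (by positivity)]
        nlinarith [hNη, hε']
      linarith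
    intro η hη
    have h1 := hle η hη
    have h2 := hle (-η) (Submodule.neg_mem _ hη)
    rw [QFormAux.Bl_neg_right] at h2
    linarith
  -- the b-side
  obtain ⟨hfdom, hlift⟩ := hdom.1 ζ hζdom
  have hfpos : ∀ᵐ x ∂μ, ((A ζ) x).im = 0 ∧ 0 ≤ ((A ζ) x).re := hA.1 ζ
  have hdag : ∀ h, h ∈ Db → StmtAux.Between μ (A ζ) h → QFormAux.Bl b S (A ζ) h ≤ 0 := by
    intro h hhDb hbetw
    obtain ⟨η, hηdom, hAη, hpair⟩ := hlift h (hDb hhDb) hbetw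
    have hηDa : η ∈ Da := by
      have hnn : AeNonneg μ h := by
        filter_upwards [hbetw] with x hx
        exact ⟨hx.1, hx.2.1⟩
      obtain ⟨ρ, hρDa, hAρ⟩ := habs h hhDb hnn ⟨η, hηdom, hAη⟩
      refine hDaIdeal ρ hρDa η hηdom ?_
      filter_upwards with x
      rw [hAη, hAρ]
    have hd := hdom.2 ζ hζdom η hηdom hpair
    have hb_eq := QFormAux.Bl_eq_sesq (q := b) (s := S) (A ζ) h
    have ha_eq := QFormAux.Bl_eq_sesq (q := a) (s := S) ζ η
    have hpair' : (⟪ζ, η⟫ : ℂ) = (⟪A ζ, h⟫ : ℂ) := by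
      rw [← hAη]; exact hpair
    have h0 := horth η hηDa
    rw [hAη] at hd
    rw [hb_eq, ← hpair']
    rw [ha_eq] at h0
    linarith
  have hf0 : A ζ = 0 :=
    StmtAux.bside hBD hblb hSb hDb hDbIdeal hbclosed hDbdense hfdom hfpos hdag
  -- hence ζ = 0
  have hζ0 : ζ = 0 := by
    have h1 := hA.2.2.1 ζ
    rw [hf0] at h1
    have h2 : (⟪(0 : Lp ℂ 2 μ), (0 : Lp ℂ 2 μ)⟫ : ℂ) = 0 := inner_zero_left _
    rw [h2] at h1
    have h3 : (⟪ζ, ζ⟫ : ℂ) = (‖ζ‖ : ℂ) ^ 2 := inner_self_eq_norm_sq_to_K ζ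
    rw [h3] at h1
    have h4 : ‖ζ‖ = 0 := by
      have : ‖((‖ζ‖ : ℂ)) ^ 2‖ = ‖ζ‖ ^ 2 := by
        rw [norm_pow, Complex.norm_real, Real.norm_eq_abs, abs_of_nonneg (norm_nonneg _)]
      rw [this] at h1
      simp only [Complex.zero_re] at h1
      nlinarith [norm_nonneg ζ, h1]
    exact norm_eq_zero.mp h4
  have hξv : ξ = v := by
    have : ξ - v = 0 := hζ0
    exact sub_eq_zero.mp this
  -- extract a good approximant
  have hev : ∀ᶠ n in Filter.atTop, a.normSq S (u n - v) < ε := by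
    apply hutd.eventually_lt_const hε
  obtain ⟨n, hn⟩ := hev.exists
  refine ⟨u n, huK n, ?_⟩
  have hundom : u n ∈ a.dom := hDa (huK n)
  have h1 : a.normSq (lama + 1) (ξ - u n) ≤ a.normSq S (ξ - u n) :=
    QFormAux.normSq_le_shift hSa
  have h2 : a.normSq S (ξ - u n) = a.normSq S (u n - v) := by
    rw [hξv]
    have := QFormAux.N_neg (q := a) (s := S) (Submodule.sub_mem _ hundom hvdom)
    rw [show -(u n - v) = v - u n by abel] at this
    linarith
  linarith
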